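/- The greedy solution is a vertex: the feasible point w produced by the greedy construction is a vertex of the polytope {w ∈ R^N : Aw = d, w ≥ 0}, where A is the barycenter constraint matrix and d the vector of support-point masses. Equivalently, there exists a cost vector c such that w is the unique minimizer of c^T w over this polytope. -/

import Mathlib

open scoped Classical

/-- One pass of Algorithm 3 (greedy construction) with explicit fuel: at each
step, for each measure select the first support point whose remaining demand is
nonzero, assign the minimum remaining demand among the selected points to that
tuple, and subtract it from each selected point's remaining demand. -/
noncomputable def greedy (n : ℕ) [NeZero n] (m : Fin n → ℕ) :
    ℕ → (∀ i, Fin (m i) → ℝ) → ((∀ i, Fin (m i)) → ℝ)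
  | 0, _ => 0
  | (fuel + 1), b =>
    if h : ∀ i, (Finset.univ.filter (fun j => b i j ≠ 0)).Nonempty then
      let sel : ∀ i, Fin (m i) :=
        fun i => (Finset.univ.filter (fun j => b i j ≠ 0)).min' (h i)
      let mu : ℝ := Finset.univ.inf' Finset.univ_nonempty (fun i => b i (sel i))
      fun s => (if s = sel then mu else 0) +
        greedy n m fuel (fun i j => if j = sel i then b i j - mu else b i j) s
    else 0

lemma greedy_zero_case (n : ℕ) [NeZero n] (m : Fin n → ℕ) (fuel : ℕ)
    (b : ∀ i, Fin (m i) → ℝ) (hb : ∀ i j, b i j = 0)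
    (hg : greedy n m fuel b = 0) :
    (∀ s, 0 ≤ greedy n m fuel b s) ∧
    (∀ i (x : Fin (m i)),
      ∑ s ∈ Finset.univ.filter (fun s : ∀ i, Fin (m i) => s i = x),
        greedy n m fuel b s = b i x) ∧
    (∀ w' : (∀ i, Fin (m i)) → ℝ, (∀ s, 0 ≤ w' s) →
      (∀ i (x : Fin (m i)),
        ∑ s ∈ Finset.univ.filter (fun s : ∀ i, Fin (m i) => s i = x), w' s = b i x) →
      (∀ s, greedy n m fuel b s = 0 → w' s = 0) → w' = greedy n m fuel b) := by
  refine ⟨fun s => by rw [hg]; exact le_refl 0, fun i x => by simp [hg, hb], ?_⟩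
  intro w' _ _ hsupp
  funext s
  have hz := hsupp s (by rw [hg]; rfl)
  simp [hg, hz]

lemma greedy_main (n : ℕ) [NeZero n] (m : Fin n → ℕ) (fuel : ℕ) :
    ∀ b : ∀ i, Fin (m i) → ℝ, (∀ i j, 0 ≤ b i j) →
    (∀ i i', ∑ j, b i j = ∑ j, b i' j) →
    (∑ i, (Finset.univ.filter (fun j => b i j ≠ 0)).card) ≤ fuel →
    (∀ s, 0 ≤ greedy n m fuel b s) ∧
    (∀ i (x : Fin (m i)),
      ∑ s ∈ Finset.univ.filter (fun s : ∀ i, Fin (m i) => s i = x),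
        greedy n m fuel b s = b i x) ∧
    (∀ w' : (∀ i, Fin (m i)) → ℝ, (∀ s, 0 ≤ w' s) →
      (∀ i (x : Fin (m i)),
        ∑ s ∈ Finset.univ.filter (fun s : ∀ i, Fin (m i) => s i = x), w' s = b i x) →
      (∀ s, greedy n m fuel b s = 0 → w' s = 0) → w' = greedy n m fuel b) := by
  induction fuel with
  | zero =>
    intro b hb0 _ hcount
    have hb : ∀ i j, b i j = 0 := by
      intro i j
      by_contra hne
      have : 0 < ∑ i, (Finset.univ.filter (fun j => b i j ≠ 0)).card := by
        apply Finset.sum_pos' (fun _ _ => Nat.zero_le _)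
        exact ⟨i, Finset.mem_univ i, Finset.card_pos.2 ⟨j, by simp [hne]⟩⟩
      omega
    exact greedy_zero_case n m 0 b hb rfl
  | succ fuel ih =>
    intro b hb0 hsum hcount
    by_cases h : ∀ i, (Finset.univ.filter (fun j => b i j ≠ 0)).Nonempty
    · -- main case
      set sel : ∀ i, Fin (m i) :=
        fun i => (Finset.univ.filter (fun j => b i j ≠ 0)).min' (h i) with hseldef
      set μ : ℝ := Finset.univ.inf' Finset.univ_nonempty (fun i => b i (sel i)) with hμdef
      set b' : ∀ i, Fin (m i) → ℝ :=
        fun i j => if j = sel i then b i j - μ else b i j with hb'def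
      have hkey : greedy n m (fuel+1) b =
          fun s => (if s = sel then μ else 0) + greedy n m fuel b' s := by
        rw [greedy, dif_pos h]
      have hselmem : ∀ i, sel i ∈ Finset.univ.filter (fun j => b i j ≠ 0) :=
        fun i => Finset.min'_mem _ _
      have hselpos : ∀ i, 0 < b i (sel i) := by
        intro i
        have := (Finset.mem_filter.1 (hselmem i)).2
        exact lt_of_le_of_ne (hb0 i (sel i)) (Ne.symm this)
      have hμle : ∀ i, μ ≤ b i (sel i) :=
        fun i => Finset.inf'_le _ (Finset.mem_univ i)
      obtain ⟨i0, -, hi0⟩ := Finset.exists_mem_eq_inf' (Finset.univ_nonempty (α := Fin n))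
        (fun i => b i (sel i))
      have hμeq : μ = b i0 (sel i0) := hμdef.trans hi0
      have hμpos : 0 < μ := by rw [hμeq]; exact hselpos i0
      have hb'0 : ∀ i j, 0 ≤ b' i j := by
        intro i j
        by_cases hj : j = sel i
        · simp only [hb'def, hj, if_pos rfl]
          subst hj
          linarith [hμle i]
        · simp only [hb'def, if_neg hj]; exact hb0 i j
      have hb'sum : ∀ i, ∑ j, b' i j = (∑ j, b i j) - μ := by
        intro i
        have : ∀ j, b' i j = b i j - (if j = sel i then μ else 0) := by
          intro j; by_cases hj : j = sel i <;> simp [hb'def, hj]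
        simp only [this, Finset.sum_sub_distrib, Finset.sum_ite_eq', Finset.mem_univ, if_pos]
      have hb'sum' : ∀ i i', ∑ j, b' i j = ∑ j, b' i' j := by
        intro i i'; rw [hb'sum, hb'sum, hsum i i']
      have hsub : ∀ i, (Finset.univ.filter (fun j => b' i j ≠ 0)) ⊆
          (Finset.univ.filter (fun j => b i j ≠ 0)) := by
        intro i j hj
        simp only [Finset.mem_filter, Finset.mem_univ, true_and] at hj ⊢
        by_cases hjs : j = sel i
        · subst hjs; exact (Finset.mem_filter.1 (hselmem i)).2
        · simpa [hb'def, hjs] using hj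
      have hnot : sel i0 ∉ Finset.univ.filter (fun j => b' i0 j ≠ 0) := by
        simp only [Finset.mem_filter, Finset.mem_univ, true_and, not_not]
        simp [hb'def, hμeq]
      have hcount' : (∑ i, (Finset.univ.filter (fun j => b' i j ≠ 0)).card) ≤ fuel := by
        have hlt : (Finset.univ.filter (fun j => b' i0 j ≠ 0)).card <
            (Finset.univ.filter (fun j => b i0 j ≠ 0)).card :=
          Finset.card_lt_card (Finset.ssubset_iff_of_subset (hsub i0) |>.2
            ⟨sel i0, (hselmem i0), hnot⟩)
        have hsumlt : (∑ i, (Finset.univ.filter (fun j => b' i j ≠ 0)).card) <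
            ∑ i, (Finset.univ.filter (fun j => b i j ≠ 0)).card :=
          Finset.sum_lt_sum (fun i _ => Finset.card_le_card (hsub i))
            ⟨i0, Finset.mem_univ i0, hlt⟩
        omega
      obtain ⟨hv0, hvmarg, hvuniq⟩ := ih b' hb'0 hb'sum' hcount'
      set v := greedy n m fuel b' with hvdef
      -- nonnegativity
      have hw0 : ∀ s, 0 ≤ greedy n m (fuel+1) b s := by
        intro s
        rw [hkey]
        show 0 ≤ (if s = sel then μ else 0) + v s
        by_cases hs : s = sel
        · rw [if_pos hs]; subst hs; linarith [hv0 sel, hμpos.le]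
        · rw [if_neg hs]; simpa using hv0 s
      -- marginals
      have hwmarg : ∀ i (x : Fin (m i)),
          ∑ s ∈ Finset.univ.filter (fun s : ∀ i, Fin (m i) => s i = x),
            greedy n m (fuel+1) b s = b i x := by
        intro i x
        rw [hkey]
        rw [Finset.sum_add_distrib, hvmarg i x, Finset.sum_ite_eq']
        by_cases hx : sel i = x
        · rw [if_pos (by simp [hx]), hb'def]
          simp [← hx]
        · rw [if_neg (by simp [Ne.symm]; exact fun hc => hx (by rw [hc])), hb'def]
          simp only [hb'def]
          rw [if_neg (fun hc => hx hc.symm)]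
          ring
      refine ⟨hw0, hwmarg, ?_⟩
      -- uniqueness
      intro w' hw'0 hw'marg hw'supp
      have hvz : ∀ s ∈ Finset.univ.filter (fun s : ∀ i, Fin (m i) => s i0 = sel i0),
          v s = 0 := by
        have hmz : ∑ s ∈ Finset.univ.filter
            (fun s : ∀ i, Fin (m i) => s i0 = sel i0), v s = 0 := by
          rw [hvmarg i0 (sel i0)]
          simp [hb'def, ← hμeq]
        intro s hs
        exact (Finset.sum_eq_zero_iff_of_nonneg (fun s _ => hv0 s)).1 hmz s hs
      have hwz : ∀ s, s i0 = sel i0 → s ≠ sel → greedy n m (fuel+1) b s = 0 := by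
        intro s hsi hne
        rw [hkey]
        simp only [if_neg hne, zero_add]
        exact hvz s (by simp [hsi])
      have hw'sel : w' sel = μ := by
        have hsum0 := hw'marg i0 (sel i0)
        rw [hμeq, ← hsum0]
        symm
        apply Finset.sum_eq_single_of_mem sel (by simp)
        intro s hs hne
        exact hw'supp s (hwz s (by simpa using hs) hne)
      set w'' : (∀ i, Fin (m i)) → ℝ := fun s => w' s - (if s = sel then μ else 0)
        with hw''def
      have hw''0 : ∀ s, 0 ≤ w'' s := by
        intro s
        by_cases hs : s = sel
        · simp [hw''def, hs, hw'sel]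
        · simp [hw''def, hs]; exact hw'0 s
      have hw''marg : ∀ i (x : Fin (m i)),
          ∑ s ∈ Finset.univ.filter (fun s : ∀ i, Fin (m i) => s i = x), w'' s
            = b' i x := by
        intro i x
        simp only [hw''def]
        rw [Finset.sum_sub_distrib, hw'marg i x, Finset.sum_ite_eq']
        by_cases hx : sel i = x
        · rw [if_pos (by simp [hx])]
          simp [hb'def, ← hx]
        · rw [if_neg (by simp; exact fun hc => hx (by rw [hc]))]
          simp only [hb'def]
          rw [if_neg (fun hc => hx hc.symm)]
          ring
      have hw''supp : ∀ s, v s = 0 → w'' s = 0 := by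
        intro s hvs
        by_cases hs : s = sel
        · simp [hw''def, hs, hw'sel]
        · simp only [hw''def, if_neg hs, sub_zero]
          exact hw'supp s (by rw [hkey]; simp [if_neg hs, hvs])
      have := hvuniq w'' hw''0 hw''marg hw''supp
      funext s
      rw [hkey]
      have h2 : w'' s = v s := by rw [this]
      simp only [hw''def] at h2
      show w' s = (if s = sel then μ else 0) + v s
      linarith
    · -- degenerate case: some measure has all-zero remaining demand
      push_neg at h
      obtain ⟨i1, hi1⟩ := h
      rw [Finset.filter_eq_empty_iff] at hi1
      have hz1 : ∑ j, b i1 j = 0 := Finset.sum_eq_zero (fun j _ => by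
        have := hi1 (Finset.mem_univ j); simpa using this)
      have hb : ∀ i j, b i j = 0 := by
        intro i j
        have hzi : ∑ j, b i j = 0 := by rw [hsum i i1, hz1]
        exact (Finset.sum_eq_zero_iff_of_nonneg (fun j _ => hb0 i j)).1 hzi j
          (Finset.mem_univ j)
      have hg : greedy n m (fuel+1) b = 0 := by
        rw [greedy, dif_neg]
        push_neg
        refine ⟨i1, ?_⟩
        rw [Finset.filter_eq_empty_iff]
        intro j _
        simpa using hi1 (Finset.mem_univ j)
      exact greedy_zero_case n m (fuel+1) b hb hg

/-- The greedy solution is a vertex of the transport polytope: it is feasible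
and there is a cost vector for which it is the unique minimizer. -/
theorem greedy_is_vertex (n : ℕ) [NeZero n] (m : Fin n → ℕ)
    (d : ∀ i, Fin (m i) → ℝ) (hd0 : ∀ i j, 0 ≤ d i j)
    (hd1 : ∀ i, ∑ j, d i j = 1) :
    ((∀ s : ∀ i, Fin (m i), 0 ≤ greedy n m (∑ i, m i) d s) ∧
      (∀ i (x : Fin (m i)),
        ∑ s ∈ Finset.univ.filter (fun s : ∀ i, Fin (m i) => s i = x),
          greedy n m (∑ i, m i) d s = d i x)) ∧
    ∃ c : (∀ i, Fin (m i)) → ℝ,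
      ∀ w' : (∀ i, Fin (m i)) → ℝ,
        ((∀ s, 0 ≤ w' s) ∧
          (∀ i (x : Fin (m i)),
            ∑ s ∈ Finset.univ.filter (fun s : ∀ i, Fin (m i) => s i = x), w' s = d i x)) →
        (∑ s, c s * greedy n m (∑ i, m i) d s ≤ ∑ s, c s * w' s) ∧
        ((∑ s, c s * w' s = ∑ s, c s * greedy n m (∑ i, m i) d s) →
          w' = greedy n m (∑ i, m i) d) := by
  obtain ⟨h0, hmarg, huniq⟩ := greedy_main n m (∑ i, m i) d hd0
    (fun i i' => by rw [hd1 i, hd1 i'])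
    (Finset.sum_le_sum (fun i _ => le_trans (Finset.card_filter_le _ _)
      (le_of_eq (Finset.card_fin (m i)))))
  set w := greedy n m (∑ i, m i) d with hwdef
  refine ⟨⟨h0, hmarg⟩, fun s => if w s = 0 then 1 else 0, ?_⟩
  intro w' ⟨hw'0, hw'marg⟩
  have hcw : ∑ s, (if w s = 0 then (1:ℝ) else 0) * w s = 0 := by
    apply Finset.sum_eq_zero
    intro s _
    by_cases hs : w s = 0 <;> simp [hs]
  have hterm : ∀ s, 0 ≤ (if w s = 0 then (1:ℝ) else 0) * w' s := by
    intro s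
    by_cases hs : w s = 0 <;> simp [hs, hw'0 s]
  constructor
  · rw [hcw]
    exact Finset.sum_nonneg (fun s _ => hterm s)
  · intro heq
    rw [hcw] at heq
    have hz := (Finset.sum_eq_zero_iff_of_nonneg (fun s _ => hterm s)).1 heq
    apply huniq w' hw'0 hw'marg
    intro s hs
    have := hz s (Finset.mem_univ s)
    rw [if_pos hs, one_mul] at this
    exact this
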